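/- Let β : ℝ → ℝ be bounded measurable with ∫_ℝ β₋(z) dz =: c < ∞, where β₋ = max(−β, 0), and let V(z) = ∫₀^z β, W(z) = ∫₀^z β₊ − c. Then V − 2c ≤ W ≤ V on ℝ, and consequently for any ν ∈ H¹(e^V dz): e^{−2c}‖ν² e^V‖_∞ ≤ 4‖ν‖_{L²(e^V dz)}·‖ν'‖_{L²(e^V dz)}. -/

import Mathlib

open MeasureTheory

/-- With V(z) = ∫₀^z β and W(z) = (∫₀^z β₊) − c where c = ∫ β₋ < ∞,
one has V − 2c ≤ W ≤ V, and for ν in the weighted H¹ space (with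
ν²e^W vanishing at ±∞): e^{−2c}‖ν²e^V‖_∞ ≤ 4‖ν‖_{L²(e^V)}‖ν'‖_{L²(e^V)}. -/
theorem stmt14 (β : ℝ → ℝ) (M : ℝ) (hβmeas : Measurable β) (hβbd : ∀ z, |β z| ≤ M)
    (c : ℝ) (hβint : Integrable (fun z => max (-(β z)) 0) (volume : Measure ℝ))
    (hc : (∫ z : ℝ, max (-(β z)) 0) = c)
    (V W : ℝ → ℝ)
    (hV : ∀ z : ℝ, V z = ∫ s in (0:ℝ)..z, β s)
    (hW : ∀ z : ℝ, W z = (∫ s in (0:ℝ)..z, max (β s) 0) - c)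
    (ν : ℝ → ℝ) (hν : Differentiable ℝ ν)
    (hν2 : Integrable (fun z => (ν z)^2 * Real.exp (V z)) (volume : Measure ℝ))
    (hν'2 : Integrable (fun z => (deriv ν z)^2 * Real.exp (V z)) (volume : Measure ℝ))
    (hdecayT : Filter.Tendsto (fun z => (ν z)^2 * Real.exp (W z)) Filter.atTop (nhds 0))
    (hdecayB : Filter.Tendsto (fun z => (ν z)^2 * Real.exp (W z)) Filter.atBot (nhds 0)) :
    (∀ z : ℝ, V z - 2*c ≤ W z ∧ W z ≤ V z) ∧
    (∀ z : ℝ, Real.exp (-2*c) * ((ν z)^2 * Real.exp (V z)) ≤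
      4 * Real.sqrt (∫ s : ℝ, (ν s)^2 * Real.exp (V s)) *
        Real.sqrt (∫ s : ℝ, (deriv ν s)^2 * Real.exp (V s))) := by
  -- local interval integrability of bounded measurable functions
  have hloc : ∀ (f : ℝ → ℝ), Measurable f → (∀ z, |f z| ≤ M) →
      ∀ a b : ℝ, IntervalIntegrable f volume a b := by
    intro f hf hbd a b
    rw [intervalIntegrable_iff]
    exact Integrable.mono' (integrableOn_const measure_Ioc_lt_top.ne)
      hf.aestronglyMeasurable.restrict
      (Filter.Eventually.of_forall fun z => by simpa using hbd z)
  have hβp_meas : Measurable (fun z => max (β z) 0) := hβmeas.max measurable_const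
  have hβm_meas : Measurable (fun z => max (-(β z)) 0) := hβmeas.neg.max measurable_const
  have hβp_bd : ∀ z, |max (β z) 0| ≤ M := by
    intro z
    rw [abs_of_nonneg (le_max_right _ _)]
    exact max_le ((abs_le.mp (hβbd z)).2) ((abs_nonneg _).trans (hβbd z))
  have hβm_bd : ∀ z, |max (-(β z)) 0| ≤ M := by
    intro z
    rw [abs_of_nonneg (le_max_right _ _)]
    have h := abs_le.mp (hβbd z)
    exact max_le (by linarith [h.1]) ((abs_nonneg _).trans (hβbd z))
  have hβp_loc := hloc _ hβp_meas hβp_bd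
  have hβm_loc := hloc _ hβm_meas hβm_bd
  have hβ_loc := hloc _ hβmeas hβbd
  -- c ≥ 0
  have hc0 : 0 ≤ c := by
    rw [← hc]
    exact integral_nonneg fun z => le_max_right _ _
  -- |∫₀^z β₋| ≤ c
  have habs : ∀ z : ℝ, |∫ s in (0:ℝ)..z, max (-(β s)) 0| ≤ c := by
    intro z
    calc |∫ s in (0:ℝ)..z, max (-(β s)) 0|
        = ‖∫ s in (0:ℝ)..z, max (-(β s)) 0‖ := (Real.norm_eq_abs _).symm
      _ ≤ ∫ s in Set.uIoc 0 z, ‖max (-(β s)) 0‖ :=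
          intervalIntegral.norm_integral_le_integral_norm_uIoc
      _ = ∫ s in Set.uIoc 0 z, max (-(β s)) 0 := by
          refine integral_congr_ae (Filter.Eventually.of_forall fun s => ?_)
          exact Real.norm_of_nonneg (le_max_right _ _)
      _ ≤ ∫ s : ℝ, max (-(β s)) 0 :=
          setIntegral_le_integral hβint (Filter.Eventually.of_forall fun s => le_max_right _ _)
      _ = c := hc
  -- V = ∫βp - ∫βm
  have hVsplit : ∀ z : ℝ, V z = (∫ s in (0:ℝ)..z, max (β s) 0) - ∫ s in (0:ℝ)..z, max (-(β s)) 0 := by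
    intro z
    rw [hV, ← intervalIntegral.integral_sub (hβp_loc 0 z) (hβm_loc 0 z)]
    refine intervalIntegral.integral_congr fun s _ => ?_
    rcases le_total 0 (β s) with h | h
    · rw [max_eq_left h, max_eq_right (neg_nonpos.mpr h)]; ring
    · rw [max_eq_right h, max_eq_left (neg_nonneg.mpr h)]; ring
  have part1 : ∀ z : ℝ, V z - 2*c ≤ W z ∧ W z ≤ V z := by
    intro z
    have h := abs_le.mp (habs z)
    constructor
    · rw [hVsplit z, hW z]; linarith [h.1]
    · rw [hVsplit z, hW z]; linarith [h.2]
  refine ⟨part1, ?_⟩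
  -- continuity of V and W
  have hVcont : Continuous V := by
    have : V = fun z => ∫ s in (0:ℝ)..z, β s := funext hV
    rw [this]
    exact intervalIntegral.continuous_primitive (fun a b => hβ_loc a b) 0
  have hWcont : Continuous W := by
    have : W = fun z => (∫ s in (0:ℝ)..z, max (β s) 0) - c := funext hW
    rw [this]
    exact (intervalIntegral.continuous_primitive (fun a b => hβp_loc a b) 0).sub continuous_const
  -- monotonicity of W
  have hWmono : ∀ ⦃a b : ℝ⦄, a ≤ b → W a ≤ W b := by
    intro a b hab
    have hsplit := intervalIntegral.integral_add_adjacent_intervals (hβp_loc 0 a) (hβp_loc a b)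
    have hnn : (0:ℝ) ≤ ∫ s in a..b, max (β s) 0 :=
      intervalIntegral.integral_nonneg hab fun s _ => le_max_right _ _
    rw [hW a, hW b]
    have : (∫ s in (0:ℝ)..a, max (β s) 0) + ∫ s in a..b, max (β s) 0
        = ∫ s in (0:ℝ)..b, max (β s) 0 := hsplit
    linarith
  -- global integrability of |ν||ν'|e^V
  have hmeasν' : Measurable (deriv ν) := measurable_deriv ν
  have hDmeas : Measurable (fun s => |ν s| * |deriv ν s| * Real.exp (V s)) :=
    ((hν.continuous.measurable.abs.mul hmeasν'.abs).mul (hVcont.measurable.exp))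
  have hI_int : Integrable (fun s => |ν s| * |deriv ν s| * Real.exp (V s)) volume := by
    refine Integrable.mono' (hν2.add hν'2) hDmeas.aestronglyMeasurable
      (Filter.Eventually.of_forall fun s => ?_)
    have h1 : |ν s| * |deriv ν s| * Real.exp (V s) ≥ 0 := by positivity
    rw [Real.norm_of_nonneg h1]
    simp only [Pi.add_apply]
    have h2 : |ν s| * |deriv ν s| ≤ ν s ^ 2 + deriv ν s ^ 2 := by
      nlinarith [sq_nonneg (|ν s| - |deriv ν s|), sq_abs (ν s), sq_abs (deriv ν s), abs_nonneg (ν s), abs_nonneg (deriv ν s)]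
    have h3 : (0:ℝ) < Real.exp (V s) := Real.exp_pos _
    nlinarith
  set I : ℝ := ∫ s : ℝ, |ν s| * |deriv ν s| * Real.exp (V s) with hIdef
  set A : ℝ := ∫ s : ℝ, (ν s)^2 * Real.exp (V s) with hAdef
  set B : ℝ := ∫ s : ℝ, (deriv ν s)^2 * Real.exp (V s) with hBdef
  -- Cauchy-Schwarz: I ≤ √A √B
  have hCS : I ≤ Real.sqrt A * Real.sqrt B := by
    have hpq : Real.HolderConjugate 2 2 := Real.HolderConjugate.two_two
    set f : ℝ → ℝ := fun s => |ν s| * Real.exp (V s / 2) with hf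
    set g : ℝ → ℝ := fun s => |deriv ν s| * Real.exp (V s / 2) with hg
    have hexp : ∀ v : ℝ, Real.exp (v/2) * Real.exp (v/2) = Real.exp v := by
      intro v; rw [← Real.exp_add]; ring_nf
    have hfsq : ∀ s, f s ^ 2 = ν s ^ 2 * Real.exp (V s) := by
      intro s; rw [hf]; dsimp only; rw [mul_pow, sq_abs, ← Real.exp_nat_mul]; norm_num
      left; ring
    have hgsq : ∀ s, g s ^ 2 = deriv ν s ^ 2 * Real.exp (V s) := by
      intro s; rw [hg]; dsimp only; rw [mul_pow, sq_abs, ← Real.exp_nat_mul]; norm_num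
      left; ring
    have hfm : AEStronglyMeasurable f volume :=
      (hν.continuous.measurable.abs.mul ((hVcont.measurable.div_const 2).exp)).aestronglyMeasurable
    have hgm : AEStronglyMeasurable g volume :=
      (hmeasν'.abs.mul ((hVcont.measurable.div_const 2).exp)).aestronglyMeasurable
    have h2 : (ENNReal.ofReal (2:ℝ)) = 2 := by norm_num
    have hfL : MemLp f (ENNReal.ofReal (2:ℝ)) volume := by
      rw [h2]
      exact (memLp_two_iff_integrable_sq hfm).mpr
        ((integrable_congr (Filter.Eventually.of_forall fun s => hfsq s)).mpr hν2)
    have hgL : MemLp g (ENNReal.ofReal (2:ℝ)) volume := by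
      rw [h2]
      exact (memLp_two_iff_integrable_sq hgm).mpr
        ((integrable_congr (Filter.Eventually.of_forall fun s => hgsq s)).mpr hν'2)
    have hH := integral_mul_le_Lp_mul_Lq_of_nonneg hpq
      (Filter.Eventually.of_forall fun s => mul_nonneg (abs_nonneg _) (Real.exp_pos _).le)
      (Filter.Eventually.of_forall fun s => mul_nonneg (abs_nonneg _) (Real.exp_pos _).le)
      hfL hgL
    have hfg : ∀ s, f s * g s = |ν s| * |deriv ν s| * Real.exp (V s) := by
      intro s; rw [hf, hg]; dsimp only
      rw [mul_mul_mul_comm, hexp]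
    have e1 : (∫ a : ℝ, f a * g a) = I := by
      rw [hIdef]; exact integral_congr_ae (Filter.Eventually.of_forall fun s => hfg s)
    have e2 : (∫ a : ℝ, f a ^ (2:ℝ)) = A := by
      rw [hAdef]
      refine integral_congr_ae (Filter.Eventually.of_forall fun s => ?_)
      dsimp only
      rw [Real.rpow_two, hfsq s]
    have e3 : (∫ a : ℝ, g a ^ (2:ℝ)) = B := by
      rw [hBdef]
      refine integral_congr_ae (Filter.Eventually.of_forall fun s => ?_)
      dsimp only
      rw [Real.rpow_two, hgsq s]
    rw [e1, e2, e3, ← Real.sqrt_eq_rpow, ← Real.sqrt_eq_rpow] at hH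
    exact hH
  -- key bound: ν z² e^{Wz} ≤ 2 I
  have hG' : ∀ s : ℝ, HasDerivAt (fun u => ν u ^ 2) (2 * ν s * deriv ν s) s := by
    intro s
    simpa using ((hν s).hasDerivAt.fun_pow 2)
  have hGint : ∀ a b : ℝ, IntervalIntegrable (fun s => 2 * ν s * deriv ν s) volume a b := by
    intro a b
    rw [intervalIntegrable_iff]
    have hcont : Continuous fun s => Real.exp (-(V s)) := Real.continuous_exp.comp hVcont.neg
    obtain ⟨C, hC⟩ := (isCompact_uIcc (a := a) (b := b)).exists_bound_of_continuousOn
      hcont.continuousOn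
    have hmaj : Integrable (fun s => C * ((ν s ^ 2 + deriv ν s ^ 2) * Real.exp (V s))) volume := by
      refine (integrable_congr (Filter.Eventually.of_forall fun s => ?_)).mpr
        ((hν2.add hν'2).const_mul C)
      simp only [Pi.add_apply]; ring
    refine Integrable.mono' hmaj.integrableOn
      (((measurable_const.mul hν.continuous.measurable).mul hmeasν').aestronglyMeasurable.restrict) ?_
    rw [ae_restrict_iff' measurableSet_uIoc]
    refine Filter.Eventually.of_forall fun s hs => ?_
    have hsmem : s ∈ Set.uIcc a b := Set.uIoc_subset_uIcc hs
    have hCs : Real.exp (-(V s)) ≤ C := by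
      have := hC s hsmem
      rwa [Real.norm_of_nonneg (Real.exp_pos _).le] at this
    have h4 : (0:ℝ) ≤ ν s ^ 2 + deriv ν s ^ 2 := by positivity
    calc ‖2 * ν s * deriv ν s‖ = |2 * ν s * deriv ν s| := Real.norm_eq_abs _
      _ ≤ ν s ^ 2 + deriv ν s ^ 2 := by
          rw [abs_mul, abs_mul, abs_two]
          nlinarith [sq_abs (ν s), sq_abs (deriv ν s), sq_nonneg (|ν s| - |deriv ν s|),
            abs_nonneg (ν s), abs_nonneg (deriv ν s)]
      _ = ((ν s ^ 2 + deriv ν s ^ 2) * Real.exp (V s)) * Real.exp (-(V s)) := by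
          rw [Real.exp_neg]
          field_simp
      _ ≤ ((ν s ^ 2 + deriv ν s ^ 2) * Real.exp (V s)) * C :=
          mul_le_mul_of_nonneg_left hCs (by positivity)
      _ = C * ((ν s ^ 2 + deriv ν s ^ 2) * Real.exp (V s)) := mul_comm _ _
  have hkey : ∀ z : ℝ, (ν z)^2 * Real.exp (W z) ≤ 2 * I := by
    intro z
    have hstep : ∀ t : ℝ, z ≤ t → (ν z)^2 * Real.exp (W z) ≤ (ν t)^2 * Real.exp (W t) + 2 * I := by
      intro t hzt
      have hFTC : (∫ s in z..t, 2 * ν s * deriv ν s) = ν t ^ 2 - ν z ^ 2 :=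
        intervalIntegral.integral_eq_sub_of_hasDerivAt (fun s _ => hG' s) (hGint z t)
      have habs2 : |∫ s in z..t, 2 * ν s * deriv ν s| ≤ ∫ s in z..t, |2 * ν s * deriv ν s| :=
        intervalIntegral.abs_integral_le_integral_abs hzt
      have e1 : (ν z)^2 ≤ (ν t)^2 + ∫ s in z..t, |2 * ν s * deriv ν s| := by
        have hneg := neg_le_abs (∫ s in z..t, 2 * ν s * deriv ν s)
        linarith
      have e2 := mul_le_mul_of_nonneg_right e1 (Real.exp_pos (W z)).le
      have e3 : (ν t)^2 * Real.exp (W z) ≤ (ν t)^2 * Real.exp (W t) :=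
        mul_le_mul_of_nonneg_left (Real.exp_le_exp.mpr (hWmono hzt)) (sq_nonneg _)
      have e4 : (∫ s in z..t, |2 * ν s * deriv ν s|) * Real.exp (W z)
          ≤ ∫ s in z..t, 2 * (|ν s| * |deriv ν s| * Real.exp (V s)) := by
        rw [← intervalIntegral.integral_mul_const]
        refine intervalIntegral.integral_mono_on hzt
          (((hGint z t).abs).mul_const _) ((hI_int.const_mul 2).intervalIntegrable) ?_
        intro s hs
        have hWs : Real.exp (W z) ≤ Real.exp (V s) :=
          Real.exp_le_exp.mpr ((hWmono hs.1).trans (part1 s).2)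
        have habs3 : |2 * ν s * deriv ν s| = 2 * (|ν s| * |deriv ν s|) := by
          rw [abs_mul, abs_mul, abs_two]; ring
        rw [habs3]
        have h5 : (0:ℝ) ≤ 2 * (|ν s| * |deriv ν s|) := by positivity
        calc 2 * (|ν s| * |deriv ν s|) * Real.exp (W z)
            ≤ 2 * (|ν s| * |deriv ν s|) * Real.exp (V s) :=
              mul_le_mul_of_nonneg_left hWs h5
          _ = 2 * (|ν s| * |deriv ν s| * Real.exp (V s)) := by ring
      have e5 : (∫ s in z..t, 2 * (|ν s| * |deriv ν s| * Real.exp (V s))) ≤ 2 * I := by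
        rw [intervalIntegral.integral_of_le hzt, hIdef, ← integral_const_mul]
        exact setIntegral_le_integral (hI_int.const_mul 2)
          (Filter.Eventually.of_forall fun s => by positivity)
      nlinarith [Real.exp_pos (W z)]
    have hT : Filter.Tendsto (fun t => (ν t)^2 * Real.exp (W t) + 2*I) Filter.atTop
        (nhds (0 + 2*I)) := hdecayT.add tendsto_const_nhds
    have := ge_of_tendsto hT (Filter.eventually_atTop.mpr ⟨z, fun t ht => hstep t ht⟩)
    simpa using this
  intro z
  have h1 : Real.exp (-2*c) * ((ν z)^2 * Real.exp (V z)) ≤ (ν z)^2 * Real.exp (W z) := by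
    have h := (part1 z).1
    have : Real.exp (-2*c) * Real.exp (V z) = Real.exp (V z - 2*c) := by
      rw [← Real.exp_add]; ring_nf
    calc Real.exp (-2*c) * ((ν z)^2 * Real.exp (V z))
        = (ν z)^2 * (Real.exp (-2*c) * Real.exp (V z)) := by ring
      _ = (ν z)^2 * Real.exp (V z - 2*c) := by rw [this]
      _ ≤ (ν z)^2 * Real.exp (W z) := by
          have := Real.exp_le_exp.mpr h
          nlinarith [sq_nonneg (ν z)]
  have hsqrtnn : 0 ≤ Real.sqrt A * Real.sqrt B := mul_nonneg (Real.sqrt_nonneg _) (Real.sqrt_nonneg _)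
  calc Real.exp (-2*c) * ((ν z)^2 * Real.exp (V z))
      ≤ (ν z)^2 * Real.exp (W z) := h1
    _ ≤ 2 * I := hkey z
    _ ≤ 2 * (Real.sqrt A * Real.sqrt B) := by linarith
    _ ≤ 4 * Real.sqrt A * Real.sqrt B := by linarith
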